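/- In a cubic graph G, given a perfect matching M and a spanning tree T with |M ∩ T| = p, removing M from G leaves a cycle cover of G with at most p + 1 cycles. -/

import Mathlib

open SimpleGraph

variable {V : Type} [Fintype V] [DecidableEq V]

private lemma reach_aux (A : SimpleGraph V) (x y : V) {v w : V} (p : A.Walk v w) :
    (A.deleteEdges {s(x,y)}).Reachable v w ∨
    ((A.deleteEdges {s(x,y)}).Reachable v x ∨ (A.deleteEdges {s(x,y)}).Reachable v y) ∧
    ((A.deleteEdges {s(x,y)}).Reachable w x ∨ (A.deleteEdges {s(x,y)}).Reachable w y) := by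
  set A' := A.deleteEdges {s(x,y)} with hA'
  induction p with
  | nil => exact Or.inl (Reachable.refl _)
  | @cons v a w h p ih =>
    by_cases hexy : s(v, a) = s(x, y)
    · have hv : v = x ∨ v = y := by
        rw [Sym2.eq_iff] at hexy
        rcases hexy with ⟨h1, _⟩ | ⟨h1, _⟩ <;> [exact Or.inl h1; exact Or.inr h1]
      have hvx : A'.Reachable v x ∨ A'.Reachable v y := by
        rcases hv with rfl | rfl <;> [exact Or.inl (Reachable.refl _); exact Or.inr (Reachable.refl _)]
      have ha : a = x ∨ a = y := by
        rw [Sym2.eq_iff] at hexy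
        rcases hexy with ⟨_, h2⟩ | ⟨_, h2⟩ <;> [exact Or.inr h2; exact Or.inl h2]
      refine Or.inr ⟨hvx, ?_⟩
      rcases ih with hr | ⟨_, hw⟩
      · rcases ha with rfl | rfl <;> [exact Or.inl hr.symm; exact Or.inr hr.symm]
      · exact hw
    · have hadj : A'.Adj v a := by
        rw [hA', deleteEdges_adj]
        exact ⟨h, by simpa using hexy⟩
      rcases ih with hr | ⟨ha, hw⟩
      · exact Or.inl (hadj.reachable.trans hr)
      · exact Or.inr ⟨ha.imp (hadj.reachable.trans ·) (hadj.reachable.trans ·), hw⟩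

private lemma del_one (A : SimpleGraph V) (e : Sym2 V) :
    Nat.card (A.deleteEdges {e}).ConnectedComponent ≤ Nat.card A.ConnectedComponent + 1 := by
  induction e with
  | h x y =>
  set A' := A.deleteEdges {s(x,y)} with hA'
  have hle : A' ≤ A := deleteEdges_le _
  classical
  set f : A'.ConnectedComponent → A.ConnectedComponent ⊕ Unit := fun c =>
    if c = A'.connectedComponentMk x then Sum.inr () else
      Sum.inl (c.map (Hom.ofLE hle)) with hf
  have hinj : Function.Injective f := by
    intro c₁ c₂ hcc
    induction c₁ using ConnectedComponent.ind with
    | _ v =>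
    induction c₂ using ConnectedComponent.ind with
    | _ w =>
    by_cases h1 : A'.connectedComponentMk v = A'.connectedComponentMk x <;>
      by_cases h2 : A'.connectedComponentMk w = A'.connectedComponentMk x
    · rw [h1, h2]
    · simp [hf, h1, h2] at hcc
    · simp [hf, h1, h2] at hcc
    · simp only [hf] at hcc
      rw [if_neg h1, if_neg h2, Sum.inl.injEq, ConnectedComponent.map_mk,
        ConnectedComponent.map_mk, ConnectedComponent.eq] at hcc
      simp only [Hom.ofLE_apply] at hcc
      obtain ⟨pw⟩ := hcc
      rcases reach_aux A x y pw with hr | ⟨hv, hw⟩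
      · exact ConnectedComponent.sound hr
      · rw [ConnectedComponent.eq] at h1 h2 ⊢
        rcases hv with hv | hv
        · exact absurd hv h1
        rcases hw with hw | hw
        · exact absurd hw h2
        exact hv.trans hw.symm
  calc Nat.card A'.ConnectedComponent
      ≤ Nat.card (A.ConnectedComponent ⊕ Unit) := Nat.card_le_card_of_injective f hinj
    _ = Nat.card A.ConnectedComponent + 1 := by simp

private lemma del_finset (A : SimpleGraph V) (S : Finset (Sym2 V)) :
    Nat.card (A.deleteEdges (↑S : Set (Sym2 V))).ConnectedComponent ≤
      Nat.card A.ConnectedComponent + S.card := by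
  classical
  induction S using Finset.induction_on generalizing A with
  | empty => simp [deleteEdges]
  | @insert e S he ih =>
    have heq : A.deleteEdges (↑(insert e S) : Set (Sym2 V)) =
        (A.deleteEdges (↑S : Set (Sym2 V))).deleteEdges {e} := by
      ext v w
      simp [deleteEdges_adj, and_assoc, and_comm, and_left_comm, or_comm]
    rw [heq, Finset.card_insert_of_notMem he]
    calc Nat.card ((A.deleteEdges (↑S : Set (Sym2 V))).deleteEdges {e}).ConnectedComponent
        ≤ Nat.card (A.deleteEdges (↑S : Set (Sym2 V))).ConnectedComponent + 1 := del_one _ _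
      _ ≤ Nat.card A.ConnectedComponent + S.card + 1 := Nat.add_le_add_right (ih A) 1
      _ = Nat.card A.ConnectedComponent + (S.card + 1) := by omega

theorem stmt15 {V : Type} [Fintype V] [DecidableEq V] (G : SimpleGraph V) [DecidableRel G.Adj]
    (hcubic : ∀ v : V, G.degree v = 3)
    (M T : Finset (Sym2 V)) (hMsub : M ⊆ G.edgeFinset) (hTsub : T ⊆ G.edgeFinset)
    (hpm : ∀ v : V, ∃! e, e ∈ M ∧ v ∈ e)
    (htconn : (SimpleGraph.fromEdgeSet (↑T : Set (Sym2 V))).Connected)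
    (htcard : T.card = Fintype.card V - 1)
    (p : ℕ) (hp : (M ∩ T).card = p) :
    (∀ v : V, ((G.deleteEdges (↑M : Set (Sym2 V))).neighborSet v).ncard = 2) ∧
    Nat.card (G.deleteEdges (↑M : Set (Sym2 V))).ConnectedComponent ≤ p + 1 := by
  constructor
  · intro v
    obtain ⟨e, ⟨heM, hve⟩, huniq⟩ := hpm v
    obtain ⟨w, rfl⟩ := Sym2.mem_iff_exists.mp hve
    have hadj : G.Adj v w := by
      have := hMsub heM
      rwa [mem_edgeFinset, mem_edgeSet] at this
    have hset : (G.deleteEdges (↑M : Set (Sym2 V))).neighborSet v =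
        G.neighborSet v \ {w} := by
      ext u
      simp only [mem_neighborSet, deleteEdges_adj, Set.mem_diff, Set.mem_singleton_iff,
        Set.mem_setOf_eq]
      constructor
      · rintro ⟨hu, hnm⟩
        refine ⟨hu, fun huw => hnm ?_⟩
        subst huw; simpa using heM
      · rintro ⟨hu, hnw⟩
        refine ⟨hu, fun hm => hnw ?_⟩
        have := huniq s(v, u) ⟨by simpa using hm, by simp⟩
        rw [Sym2.eq_iff] at this
        rcases this with ⟨_, h2⟩ | ⟨h1, h2⟩
        · exact h2
        · exact absurd h1 hadj.ne
      -- done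
    rw [hset]
    have hfin : (G.neighborSet v).Finite := Set.toFinite _
    have hwmem : w ∈ G.neighborSet v := hadj
    rw [Set.ncard_diff_singleton_of_mem hwmem]
    have : (G.neighborSet v).ncard = 3 := by
      rw [Set.ncard_eq_toFinset_card', ← neighborFinset_def]
      exact hcubic v
    omega
  · have hK : (G.deleteEdges (↑(M \ T) : Set (Sym2 V))).Connected := by
      refine htconn.mono ?_
      intro v w h
      rw [fromEdgeSet_adj] at h
      rw [deleteEdges_adj]
      have hG : G.Adj v w := by
        have := hTsub h.1
        rwa [mem_edgeFinset, mem_edgeSet] at this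
      exact ⟨hG, by simp [h.1]⟩
    have hKcard : Nat.card (G.deleteEdges (↑(M \ T) : Set (Sym2 V))).ConnectedComponent = 1 := by
      rw [Nat.card_eq_one_iff_unique]
      haveI : Nonempty V := htconn.nonempty
      refine ⟨⟨fun c₁ c₂ => ?_⟩, ⟨(G.deleteEdges _).connectedComponentMk (Classical.arbitrary _)⟩⟩
      · induction c₁ using ConnectedComponent.ind with
        | _ v =>
        induction c₂ using ConnectedComponent.ind with
        | _ w =>
        exact ConnectedComponent.sound (hK.preconnected v w)
    have heq : G.deleteEdges (↑M : Set (Sym2 V)) =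
        (G.deleteEdges (↑(M \ T) : Set (Sym2 V))).deleteEdges (↑(M ∩ T) : Set (Sym2 V)) := by
      ext v w
      simp only [deleteEdges_adj, Finset.coe_sdiff, Finset.coe_inter, Set.mem_diff,
        Set.mem_inter_iff, Finset.mem_coe]
      tauto
    rw [heq]
    calc Nat.card ((G.deleteEdges (↑(M \ T) : Set (Sym2 V))).deleteEdges
          (↑(M ∩ T) : Set (Sym2 V))).ConnectedComponent
        ≤ Nat.card (G.deleteEdges (↑(M \ T) : Set (Sym2 V))).ConnectedComponent + (M ∩ T).card :=
          del_finset _ _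
      _ = 1 + p := by rw [hKcard, hp]
      _ = p + 1 := by omega
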